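/- For k ∈ ℕ let M(k) ⊂ ℂ[x] be the subspace of polynomials divisible by x^k. Assume l(k) and d(k) are both not identically zero as polynomials in k. Then P maps M(k)^N into M(k−n)^N for all k ≥ n, and for all sufficiently large k this map P : M(k)^N → M(k−n)^N is injective and its cokernel has dimension (n − n')·N over ℂ. -/

import Mathlib

open Polynomial PowerSeries

noncomputable section

/-- ν(A): minimum over the entries of a polynomial matrix of the order of vanishing
at `x = 0` (`⊤` for the zero matrix), as a natural number via `toNat`. -/
def matNu {N : ℕ} (A : Matrix (Fin N) (Fin N) (Polynomial ℂ)) : ℕ :=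
  (⨅ i, ⨅ j, (A i j).trailingDegree).toNat

/-- The coefficient matrix `A^{ν(A)}` of `x^{ν(A)}` in `A`. -/
def trailMat {N : ℕ} (A : Matrix (Fin N) (Fin N) (Polynomial ℂ)) : Matrix (Fin N) (Fin N) ℂ :=
  fun i j => (A i j).coeff (matNu A)

open Classical in
/-- The matrix `L(k) = Σ_{j ∈ J} k(k-1)⋯(k-j+1) A_j^{n_j}`, where
`J = {j : A_j ≠ 0 ∧ j - ν(A_j) = n}`. -/
def Lmat {N m : ℕ} (A : Fin (m + 1) → Matrix (Fin N) (Fin N) (Polynomial ℂ)) (n : ℤ)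
    (k : ℂ) : Matrix (Fin N) (Fin N) ℂ :=
  ∑ j : Fin (m + 1),
    if A j ≠ 0 ∧ (j : ℤ) - matNu (A j) = n then
      (∏ t ∈ Finset.range (j : ℕ), (k - t)) • trailMat (A j)
    else 0

/-- The differential operator `P = Σ_{i=0}^m A_i(x) (d/dx)^i` acting ℂ-linearly on
`ℂ[[x]]^N`. -/
def Pop {N m : ℕ} (A : Fin (m + 1) → Matrix (Fin N) (Fin N) (Polynomial ℂ)) :
    Module.End ℂ (Fin N → PowerSeries ℂ) :=
  ∑ i : Fin (m + 1),
    LinearMap.pi fun b : Fin N =>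
      ∑ c : Fin N,
        (LinearMap.mulLeft ℂ ((A i b c : Polynomial ℂ) : PowerSeries ℂ) ∘ₗ
            (((PowerSeries.derivative ℂ).toLinearMap : Module.End ℂ (PowerSeries ℂ)) ^ (i : ℕ))) ∘ₗ
          LinearMap.proj c

/-- A formal power series is convergent if it has positive radius of convergence. -/
def PSConvergent (f : PowerSeries ℂ) : Prop :=
  ∃ r : ℝ, 0 < r ∧ Summable fun j : ℕ => ‖PowerSeries.coeff j f‖ * r ^ j

end

noncomputable section

/-- `d°A`: the maximum over the entries of a polynomial matrix of their degrees
(as a natural number; meaningful for `A ≠ 0`). -/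
def matDeg {N : ℕ} (A : Matrix (Fin N) (Fin N) (Polynomial ℂ)) : ℕ :=
  Finset.univ.sup fun p : Fin N × Fin N => (A p.1 p.2).natDegree

/-- The coefficient matrix `A^{d°A}` of `x^{d°A}` in `A`. -/
def leadMat {N : ℕ} (A : Matrix (Fin N) (Fin N) (Polynomial ℂ)) : Matrix (Fin N) (Fin N) ℂ :=
  fun i j => (A i j).coeff (matDeg A)

open Classical in
/-- The matrix `D(k) = Σ_{j ∈ J'} k(k-1)⋯(k-j+1) A_j^{d_j}`, where
`J' = {j : A_j ≠ 0 ∧ j - d°(A_j) = n'}`. -/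
def Dmat {N m : ℕ} (A : Fin (m + 1) → Matrix (Fin N) (Fin N) (Polynomial ℂ)) (n' : ℤ)
    (k : ℂ) : Matrix (Fin N) (Fin N) ℂ :=
  ∑ j : Fin (m + 1),
    if A j ≠ 0 ∧ (j : ℤ) - matDeg (A j) = n' then
      (∏ t ∈ Finset.range (j : ℕ), (k - t)) • leadMat (A j)
    else 0

/-- The differential operator `P = Σ_{i=0}^m A_i(x) (d/dx)^i` acting ℂ-linearly on
`ℂ[x]^N`. -/
def PopPoly {N m : ℕ} (A : Fin (m + 1) → Matrix (Fin N) (Fin N) (Polynomial ℂ)) :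
    Module.End ℂ (Fin N → Polynomial ℂ) :=
  ∑ i : Fin (m + 1),
    LinearMap.pi fun b : Fin N =>
      ∑ c : Fin N,
        (LinearMap.mulLeft ℂ (A i b c) ∘ₗ
            ((Polynomial.derivative : Module.End ℂ (Polynomial ℂ)) ^ (i : ℕ))) ∘ₗ
          LinearMap.proj c

end

/-- `M(k)^N`: the subspace of `ℂ[x]^N` of vectors of polynomials divisible by `x^k`. -/
noncomputable def Msub (N : ℕ) (k : ℕ) : Submodule ℂ (Fin N → Polynomial ℂ) where
  carrier := {u | ∀ (b : Fin N) (j : ℕ), j < k → (u b).coeff j = 0}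
  add_mem' := by
    intro u v hu hv b j hj
    simp [Polynomial.coeff_add, hu b j hj, hv b j hj]
  zero_mem' := by intro b j hj; simp
  smul_mem' := by
    intro c u hu b j hj
    simp [hu b j hj]

open Polynomial Finset

lemma cast_descFactorial (k i : ℕ) :
    ((k.descFactorial i : ℂ)) = ∏ t ∈ Finset.range i, ((k : ℂ) - t) := by
  induction i with
  | zero => simp
  | succ i ih =>
    rw [Nat.descFactorial_succ, Finset.prod_range_succ, ← ih]
    rcases le_or_gt i k with h | h
    · push_cast [h]; ring
    · have h1 : k - i = 0 := Nat.sub_eq_zero_of_le h.le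
      rw [h1, Nat.descFactorial_eq_zero_iff_lt.mpr h]
      simp

lemma PopPoly_apply {N m : ℕ} (A : Fin (m + 1) → Matrix (Fin N) (Fin N) (Polynomial ℂ))
    (u : Fin N → Polynomial ℂ) (b : Fin N) :
    PopPoly A u b = ∑ i : Fin (m + 1), ∑ c : Fin N,
      A i b c * Polynomial.derivative^[(i : ℕ)] (u c) := by
  simp only [PopPoly, LinearMap.sum_apply, Finset.sum_apply, LinearMap.pi_apply,
    LinearMap.coe_sum, LinearMap.comp_apply, LinearMap.proj_apply,
    LinearMap.mulLeft_apply, Module.End.pow_apply]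

lemma coeff_PopPoly {N m : ℕ} (A : Fin (m + 1) → Matrix (Fin N) (Fin N) (Polynomial ℂ))
    (u : Fin N → Polynomial ℂ) (b : Fin N) (d : ℕ) :
    (PopPoly A u b).coeff d = ∑ i : Fin (m + 1), ∑ c : Fin N,
      ∑ x ∈ Finset.HasAntidiagonal.antidiagonal d,
        (A i b c).coeff x.1 * (((x.2 + (i:ℕ)).descFactorial (i:ℕ) : ℂ) * (u c).coeff (x.2 + (i:ℕ))) := by
  rw [PopPoly_apply]
  simp only [finset_sum_coeff, Polynomial.coeff_mul, Polynomial.coeff_iterate_derivative, nsmul_eq_mul]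

lemma matNu_le_of_coeff_ne {N : ℕ} {B : Matrix (Fin N) (Fin N) (Polynomial ℂ)}
    {b c : Fin N} {s : ℕ} (h : (B b c).coeff s ≠ 0) : matNu B ≤ s := by
  have h0 : B b c ≠ 0 := fun e => h (by simp [e])
  have h1 : (B b c).trailingDegree ≤ (s : ℕ∞) :=
    Polynomial.trailingDegree_le_of_ne_zero h
  have h2 : (⨅ i, ⨅ j, (B i j).trailingDegree) ≤ (s : ℕ∞) :=
    le_trans (le_trans (iInf_le _ b) (iInf_le _ c)) h1
  have := ENat.toNat_le_toNat h2 (by simp)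
  simpa [matNu] using this

lemma le_matDeg_of_coeff_ne {N : ℕ} {B : Matrix (Fin N) (Fin N) (Polynomial ℂ)}
    {b c : Fin N} {s : ℕ} (h : (B b c).coeff s ≠ 0) : s ≤ matDeg B := by
  refine le_trans (Polynomial.le_natDegree_of_ne_zero h) ?_
  exact Finset.le_sup (f := fun p : Fin N × Fin N => (B p.1 p.2).natDegree)
    (Finset.mem_univ (b, c))

lemma mem_Msub_iff {N k : ℕ} {u : Fin N → Polynomial ℂ} :
    u ∈ Msub N k ↔ ∀ (b : Fin N) (j : ℕ), j < k → (u b).coeff j = 0 := Iff.rfl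

/-- Low vanishing: if `u ∈ M(k)^N` then `(Pu)_b.coeff d = 0` for `d < k - n`. -/
lemma low_coeff_zero {N m : ℕ} {A : Fin (m + 1) → Matrix (Fin N) (Fin N) (Polynomial ℂ)}
    {n : ℤ} (hn_ub : ∀ i, A i ≠ 0 → (i : ℤ) - matNu (A i) ≤ n)
    {k : ℕ} {u : Fin N → Polynomial ℂ} (hu : u ∈ Msub N k)
    (b : Fin N) {d : ℕ} (hd : (d : ℤ) < (k : ℤ) - n) :
    (PopPoly A u b).coeff d = 0 := by
  rw [coeff_PopPoly]
  refine Finset.sum_eq_zero fun i _ => Finset.sum_eq_zero fun c _ =>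
    Finset.sum_eq_zero fun x hx => ?_
  by_contra h
  have hA : (A i b c).coeff x.1 ≠ 0 := fun e => h (by simp [e])
  have hU : (u c).coeff (x.2 + (i : ℕ)) ≠ 0 := fun e => h (by simp [e])
  have hAne : A i ≠ 0 := fun e => hA (by simp [e])
  have h1 : (matNu (A i) : ℤ) ≤ (x.1 : ℤ) := by exact_mod_cast matNu_le_of_coeff_ne hA
  have h2 : (k : ℤ) ≤ (x.2 : ℤ) + (i : ℕ) := by
    have := hu c (x.2 + (i : ℕ))
    by_contra hc
    exact hU (this (by omega))
  have h3 : (i : ℤ) - matNu (A i) ≤ n := hn_ub i hAne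
  have hxd : x.1 + x.2 = d := Finset.HasAntidiagonal.mem_antidiagonal.mp hx
  omega

/-- High vanishing: if all coefficients of `u` above `J` vanish then
`(Pu)_b.coeff d = 0` for `d > J - n'`. -/
lemma high_coeff_zero {N m : ℕ} {A : Fin (m + 1) → Matrix (Fin N) (Fin N) (Polynomial ℂ)}
    {n' : ℤ} (hn'_lb : ∀ i, A i ≠ 0 → n' ≤ (i : ℤ) - matDeg (A i))
    {J : ℕ} {u : Fin N → Polynomial ℂ} (hu : ∀ (c : Fin N) (j : ℕ), J < j → (u c).coeff j = 0)
    (b : Fin N) {d : ℕ} (hd : (J : ℤ) - n' < d) :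
    (PopPoly A u b).coeff d = 0 := by
  rw [coeff_PopPoly]
  refine Finset.sum_eq_zero fun i _ => Finset.sum_eq_zero fun c _ =>
    Finset.sum_eq_zero fun x hx => ?_
  by_contra h
  have hA : (A i b c).coeff x.1 ≠ 0 := fun e => h (by simp [e])
  have hU : (u c).coeff (x.2 + (i : ℕ)) ≠ 0 := fun e => h (by simp [e])
  have hAne : A i ≠ 0 := fun e => hA (by simp [e])
  have h1 : (x.1 : ℤ) ≤ (matDeg (A i) : ℤ) := by exact_mod_cast le_matDeg_of_coeff_ne hA
  have h2 : (x.2 : ℤ) + (i : ℕ) ≤ (J : ℤ) := by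
    by_contra hc
    exact hU (hu c (x.2 + (i : ℕ)) (by omega))
  have h3 : n' ≤ (i : ℤ) - matDeg (A i) := hn'_lb i hAne
  have hxd : x.1 + x.2 = d := Finset.HasAntidiagonal.mem_antidiagonal.mp hx
  omega

open Classical in
lemma low_coeff_exact {N m : ℕ} {A : Fin (m + 1) → Matrix (Fin N) (Fin N) (Polynomial ℂ)}
    {n : ℤ} (hn_ub : ∀ i, A i ≠ 0 → (i : ℤ) - matNu (A i) ≤ n)
    {k : ℕ} {u : Fin N → Polynomial ℂ} (hu : u ∈ Msub N k)
    {d₀ : ℕ} (hd₀ : (d₀ : ℤ) = (k : ℤ) - n) (b : Fin N) :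
    (PopPoly A u b).coeff d₀ = ∑ c, Lmat A n (k : ℂ) b c * (u c).coeff k := by
  rw [coeff_PopPoly]
  have hL : ∀ c, Lmat A n (k : ℂ) b c = ∑ j : Fin (m + 1),
      if A j ≠ 0 ∧ (j : ℤ) - matNu (A j) = n then
        (∏ t ∈ Finset.range (j : ℕ), ((k : ℂ) - t)) * trailMat (A j) b c
      else 0 := by
    intro c
    simp only [Lmat, Finset.sum_apply, Matrix.sum_apply]
    refine Finset.sum_congr rfl fun j _ => ?_
    split <;> simp [Matrix.smul_apply]
  simp only [hL, Finset.sum_mul]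
  rw [Finset.sum_comm]
  refine Finset.sum_congr rfl fun c _ => Finset.sum_congr rfl fun i _ => ?_
  -- inner sum over the antidiagonal
  by_cases hcond : A i ≠ 0 ∧ (i : ℤ) - matNu (A i) = n
  · rw [if_pos hcond]
    by_cases hik : (i : ℕ) ≤ k
    · have hmem : (matNu (A i), k - (i : ℕ)) ∈ Finset.HasAntidiagonal.antidiagonal d₀ := by
        rw [Finset.HasAntidiagonal.mem_antidiagonal]
        have h2 := hcond.2
        omega
      rw [Finset.sum_eq_single_of_mem _ hmem]
      · have hsub : k - (i : ℕ) + (i : ℕ) = k := by omega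
        rw [hsub, cast_descFactorial]
        show (A i b c).coeff (matNu (A i)) * _ = _
        rw [show (A i b c).coeff (matNu (A i)) = trailMat (A i) b c from rfl]
        ring
      · intro x hx hne
        by_contra h
        have hA : (A i b c).coeff x.1 ≠ 0 := fun e => h (by simp [e])
        have hU : (u c).coeff (x.2 + (i : ℕ)) ≠ 0 := fun e => h (by simp [e])
        have h1 : (matNu (A i) : ℤ) ≤ (x.1 : ℤ) := by exact_mod_cast matNu_le_of_coeff_ne hA
        have h2 : (k : ℤ) ≤ (x.2 : ℤ) + (i : ℕ) := by
          by_contra hc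
          exact hU (hu c (x.2 + (i : ℕ)) (by omega))
        have hxd : x.1 + x.2 = d₀ := Finset.HasAntidiagonal.mem_antidiagonal.mp hx
        have h3 := hcond.2
        apply hne
        have e1 : x.1 = matNu (A i) := by omega
        have e2 : x.2 = k - (i : ℕ) := by omega
        exact Prod.ext e1 e2
    · have hzero : (∏ t ∈ Finset.range (i : ℕ), ((k : ℂ) - t)) = 0 := by
        have hmem0 : k ∈ Finset.range (i : ℕ) := Finset.mem_range.mpr (by omega)
        exact Finset.prod_eq_zero hmem0 (by simp)
      rw [hzero, zero_mul, zero_mul]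
      refine Finset.sum_eq_zero fun x hx => ?_
      by_contra h
      have hA : (A i b c).coeff x.1 ≠ 0 := fun e => h (by simp [e])
      have hU : (u c).coeff (x.2 + (i : ℕ)) ≠ 0 := fun e => h (by simp [e])
      have h1 : (matNu (A i) : ℤ) ≤ (x.1 : ℤ) := by exact_mod_cast matNu_le_of_coeff_ne hA
      have h2 : (k : ℤ) ≤ (x.2 : ℤ) + (i : ℕ) := by
        by_contra hc
        exact hU (hu c (x.2 + (i : ℕ)) (by omega))
      have hxd : x.1 + x.2 = d₀ := Finset.HasAntidiagonal.mem_antidiagonal.mp hx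
      have h3 := hcond.2
      omega
  · rw [if_neg hcond, zero_mul]
    refine Finset.sum_eq_zero fun x hx => ?_
    by_contra h
    have hA : (A i b c).coeff x.1 ≠ 0 := fun e => h (by simp [e])
    have hU : (u c).coeff (x.2 + (i : ℕ)) ≠ 0 := fun e => h (by simp [e])
    have hAne : A i ≠ 0 := fun e => hA (by simp [e])
    have h1 : (matNu (A i) : ℤ) ≤ (x.1 : ℤ) := by exact_mod_cast matNu_le_of_coeff_ne hA
    have h2 : (k : ℤ) ≤ (x.2 : ℤ) + (i : ℕ) := by
      by_contra hc
      exact hU (hu c (x.2 + (i : ℕ)) (by omega))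
    have h3 : (i : ℤ) - matNu (A i) ≤ n := hn_ub i hAne
    have hxd : x.1 + x.2 = d₀ := Finset.HasAntidiagonal.mem_antidiagonal.mp hx
    exact hcond ⟨hAne, by omega⟩

open Classical in
lemma high_coeff_exact {N m : ℕ} {A : Fin (m + 1) → Matrix (Fin N) (Fin N) (Polynomial ℂ)}
    {n' : ℤ} (hn'_lb : ∀ i, A i ≠ 0 → n' ≤ (i : ℤ) - matDeg (A i))
    {J : ℕ} {u : Fin N → Polynomial ℂ}
    (hu : ∀ (c : Fin N) (j : ℕ), J < j → (u c).coeff j = 0)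
    {d₁ : ℕ} (hd₁ : (d₁ : ℤ) = (J : ℤ) - n') (b : Fin N) :
    (PopPoly A u b).coeff d₁ = ∑ c, Dmat A n' (J : ℂ) b c * (u c).coeff J := by
  rw [coeff_PopPoly]
  have hD : ∀ c, Dmat A n' (J : ℂ) b c = ∑ j : Fin (m + 1),
      if A j ≠ 0 ∧ (j : ℤ) - matDeg (A j) = n' then
        (∏ t ∈ Finset.range (j : ℕ), ((J : ℂ) - t)) * leadMat (A j) b c
      else 0 := by
    intro c
    simp only [Dmat, Finset.sum_apply, Matrix.sum_apply]
    refine Finset.sum_congr rfl fun j _ => ?_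
    split <;> simp [Matrix.smul_apply]
  simp only [hD, Finset.sum_mul]
  rw [Finset.sum_comm]
  refine Finset.sum_congr rfl fun c _ => Finset.sum_congr rfl fun i _ => ?_
  by_cases hcond : A i ≠ 0 ∧ (i : ℤ) - matDeg (A i) = n'
  · rw [if_pos hcond]
    by_cases hik : (i : ℕ) ≤ J
    · have hmem : (matDeg (A i), J - (i : ℕ)) ∈ Finset.HasAntidiagonal.antidiagonal d₁ := by
        rw [Finset.HasAntidiagonal.mem_antidiagonal]
        have h2 := hcond.2
        omega
      rw [Finset.sum_eq_single_of_mem _ hmem]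
      · have hsub : J - (i : ℕ) + (i : ℕ) = J := by omega
        rw [hsub, cast_descFactorial]
        show (A i b c).coeff (matDeg (A i)) * _ = _
        rw [show (A i b c).coeff (matDeg (A i)) = leadMat (A i) b c from rfl]
        ring
      · intro x hx hne
        by_contra h
        have hA : (A i b c).coeff x.1 ≠ 0 := fun e => h (by simp [e])
        have hU : (u c).coeff (x.2 + (i : ℕ)) ≠ 0 := fun e => h (by simp [e])
        have h1 : (x.1 : ℤ) ≤ (matDeg (A i) : ℤ) := by exact_mod_cast le_matDeg_of_coeff_ne hA
        have h2 : (x.2 : ℤ) + (i : ℕ) ≤ (J : ℤ) := by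
          by_contra hc
          exact hU (hu c (x.2 + (i : ℕ)) (by omega))
        have hxd : x.1 + x.2 = d₁ := Finset.HasAntidiagonal.mem_antidiagonal.mp hx
        have h3 := hcond.2
        apply hne
        have e1 : x.1 = matDeg (A i) := by omega
        have e2 : x.2 = J - (i : ℕ) := by omega
        exact Prod.ext e1 e2
    · have hzero : (∏ t ∈ Finset.range (i : ℕ), ((J : ℂ) - t)) = 0 := by
        have hmem0 : J ∈ Finset.range (i : ℕ) := Finset.mem_range.mpr (by omega)
        exact Finset.prod_eq_zero hmem0 (by simp)
      rw [hzero, zero_mul, zero_mul]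
      refine Finset.sum_eq_zero fun x hx => ?_
      by_contra h
      have hU : (u c).coeff (x.2 + (i : ℕ)) ≠ 0 := fun e => h (by simp [e])
      have h2 : (x.2 : ℤ) + (i : ℕ) ≤ (J : ℤ) := by
        by_contra hc
        exact hU (hu c (x.2 + (i : ℕ)) (by omega))
      omega
  · rw [if_neg hcond, zero_mul]
    refine Finset.sum_eq_zero fun x hx => ?_
    by_contra h
    have hA : (A i b c).coeff x.1 ≠ 0 := fun e => h (by simp [e])
    have hU : (u c).coeff (x.2 + (i : ℕ)) ≠ 0 := fun e => h (by simp [e])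
    have hAne : A i ≠ 0 := fun e => hA (by simp [e])
    have h1 : (x.1 : ℤ) ≤ (matDeg (A i) : ℤ) := by exact_mod_cast le_matDeg_of_coeff_ne hA
    have h2 : (x.2 : ℤ) + (i : ℕ) ≤ (J : ℤ) := by
      by_contra hc
      exact hU (hu c (x.2 + (i : ℕ)) (by omega))
    have h3 : n' ≤ (i : ℤ) - matDeg (A i) := hn'_lb i hAne
    have hxd : x.1 + x.2 = d₁ := Finset.HasAntidiagonal.mem_antidiagonal.mp hx
    exact hcond ⟨hAne, by omega⟩

open Classical in
/-- polynomial (in `k`) version of `Lmat`-style matrices: general scaffold. -/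
noncomputable def LmatX {N m : ℕ} (A : Fin (m + 1) → Matrix (Fin N) (Fin N) (Polynomial ℂ))
    (n : ℤ) : Matrix (Fin N) (Fin N) (Polynomial ℂ) :=
  ∑ j : Fin (m + 1),
    if A j ≠ 0 ∧ (j : ℤ) - matNu (A j) = n then
      (∏ t ∈ Finset.range (j : ℕ), (Polynomial.X - Polynomial.C (t : ℂ))) •
        (trailMat (A j)).map Polynomial.C
    else 0

open Classical in
noncomputable def DmatX {N m : ℕ} (A : Fin (m + 1) → Matrix (Fin N) (Fin N) (Polynomial ℂ))
    (n' : ℤ) : Matrix (Fin N) (Fin N) (Polynomial ℂ) :=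
  ∑ j : Fin (m + 1),
    if A j ≠ 0 ∧ (j : ℤ) - matDeg (A j) = n' then
      (∏ t ∈ Finset.range (j : ℕ), (Polynomial.X - Polynomial.C (t : ℂ))) •
        (leadMat (A j)).map Polynomial.C
    else 0

lemma LmatX_eval {N m : ℕ} (A : Fin (m + 1) → Matrix (Fin N) (Fin N) (Polynomial ℂ))
    (n : ℤ) (z : ℂ) :
    (LmatX A n).map (Polynomial.eval z) = Lmat A n z := by
  classical
  funext b c
  simp only [LmatX, Lmat, Matrix.map_apply, Matrix.sum_apply, Polynomial.eval_finset_sum]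
  refine Finset.sum_congr rfl fun j _ => ?_
  split
  · simp [Matrix.smul_apply, Matrix.map_apply, Polynomial.eval_prod]
  · simp

lemma DmatX_eval {N m : ℕ} (A : Fin (m + 1) → Matrix (Fin N) (Fin N) (Polynomial ℂ))
    (n' : ℤ) (z : ℂ) :
    (DmatX A n').map (Polynomial.eval z) = Dmat A n' z := by
  classical
  funext b c
  simp only [DmatX, Dmat, Matrix.map_apply, Matrix.sum_apply, Polynomial.eval_finset_sum]
  refine Finset.sum_congr rfl fun j _ => ?_
  split
  · simp [Matrix.smul_apply, Matrix.map_apply, Polynomial.eval_prod]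
  · simp

lemma det_Lmat_eq_eval {N m : ℕ} (A : Fin (m + 1) → Matrix (Fin N) (Fin N) (Polynomial ℂ))
    (n : ℤ) (z : ℂ) :
    (Lmat A n z).det = Polynomial.eval z (LmatX A n).det := by
  rw [← LmatX_eval A n z, ← Polynomial.coe_evalRingHom, ← RingHom.mapMatrix_apply,
    ← RingHom.map_det]

lemma det_Dmat_eq_eval {N m : ℕ} (A : Fin (m + 1) → Matrix (Fin N) (Fin N) (Polynomial ℂ))
    (n' : ℤ) (z : ℂ) :
    (Dmat A n' z).det = Polynomial.eval z (DmatX A n').det := by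
  rw [← DmatX_eval A n' z, ← Polynomial.coe_evalRingHom, ← RingHom.mapMatrix_apply,
    ← RingHom.map_det]

/-- If a complex polynomial is nonzero somewhere, it is nonzero on all large naturals. -/
lemma eventually_ne_zero_of_exists {p : Polynomial ℂ} (h : ∃ z, Polynomial.eval z p ≠ 0) :
    ∃ K : ℕ, ∀ j : ℕ, K ≤ j → Polynomial.eval (j : ℂ) p ≠ 0 := by
  obtain ⟨z, hz⟩ := h
  have hp : p ≠ 0 := fun e => hz (by simp [e])
  have hfin : {x : ℂ | Polynomial.IsRoot p x}.Finite := Polynomial.finite_setOf_isRoot hp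
  have hfin2 : {j : ℕ | Polynomial.eval (j : ℂ) p = 0}.Finite := by
    have : {j : ℕ | Polynomial.eval (j : ℂ) p = 0}
        = (fun j : ℕ => (j : ℂ)) ⁻¹' {x : ℂ | Polynomial.IsRoot p x} := rfl
    rw [this]
    exact Set.Finite.preimage (Set.injOn_of_injective Nat.cast_injective) hfin
  obtain ⟨K, hK⟩ := hfin2.bddAbove
  refine ⟨K + 1, fun j hj hzero => ?_⟩
  have : j ≤ K := hK hzero
  omega

lemma Msub_antitone {N : ℕ} {k₁ k₂ : ℕ} (h : k₁ ≤ k₂) : Msub N k₂ ≤ Msub N k₁ :=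
  fun _ hu b j hj => hu b j (lt_of_lt_of_le hj h)

/-- a matrix with nonzero determinant gives an injective `mulVec`. -/
lemma mulVec_eq_zero_of_det_ne {N : ℕ} {M : Matrix (Fin N) (Fin N) ℂ}
    (h : M.det ≠ 0) {v : Fin N → ℂ} (hv : M.mulVec v = 0) : v = 0 := by
  have hu : IsUnit M := (Matrix.isUnit_iff_isUnit_det M).mpr (isUnit_iff_ne_zero.mpr h)
  have := Matrix.mulVec_injective_iff_isUnit.mpr hu
  have h0 : M.mulVec v = M.mulVec 0 := by simpa using hv
  exact this h0

lemma mulVec_inv_cancel {N : ℕ} {M : Matrix (Fin N) (Fin N) ℂ}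
    (h : M.det ≠ 0) (v : Fin N → ℂ) : M.mulVec (M⁻¹.mulVec v) = v := by
  rw [Matrix.mulVec_mulVec, Matrix.mul_nonsing_inv M (isUnit_iff_ne_zero.mpr h),
    Matrix.one_mulVec]

/-- the mapping property: `P` maps `M(k)^N` into `M(k-n)^N` for `k ≥ n`. -/
lemma Pop_maps {N m : ℕ} {A : Fin (m + 1) → Matrix (Fin N) (Fin N) (Polynomial ℂ)}
    {n : ℤ} (hn_ub : ∀ i, A i ≠ 0 → (i : ℤ) - matNu (A i) ≤ n)
    {k : ℕ} (hk : n ≤ (k : ℤ)) {u : Fin N → Polynomial ℂ} (hu : u ∈ Msub N k) :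
    PopPoly A u ∈ Msub N ((k : ℤ) - n).toNat := by
  intro b j hj
  refine low_coeff_zero hn_ub hu b ?_
  omega

lemma Pop_inj {N m : ℕ} {A : Fin (m + 1) → Matrix (Fin N) (Fin N) (Polynomial ℂ)}
    {n : ℤ} (hn_ub : ∀ i, A i ≠ 0 → (i : ℤ) - matNu (A i) ≤ n)
    {k : ℕ} (hk : n ≤ (k : ℤ))
    (hL : ∀ j : ℕ, k ≤ j → (Lmat A n (j : ℂ)).det ≠ 0)
    {u : Fin N → Polynomial ℂ} (hu : u ∈ Msub N k) (hPu : PopPoly A u = 0) :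
    u = 0 := by
  classical
  by_contra hu0
  have hex : ∃ j : ℕ, ∃ c, (u c).coeff j ≠ 0 := by
    obtain ⟨c, hc⟩ := Function.ne_iff.mp hu0
    have hc' : u c ≠ 0 := by simpa using hc
    by_contra hall
    push_neg at hall
    exact hc' (Polynomial.ext_iff.mpr fun j => by simpa using hall j c)
  set j₀ := Nat.find hex with hj₀def
  obtain ⟨c₀, hc₀⟩ := Nat.find_spec hex
  have hj₀k : k ≤ j₀ := by
    by_contra hcon
    exact hc₀ (hu c₀ j₀ (by omega))
  have humem : u ∈ Msub N j₀ := by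
    intro b j hj
    by_contra hne
    exact Nat.find_min hex hj ⟨b, hne⟩
  have hd₀ : ((((j₀ : ℤ) - n).toNat : ℤ)) = (j₀ : ℤ) - n := by omega
  have hmv : (Lmat A n (j₀ : ℂ)).mulVec (fun c => (u c).coeff j₀) = 0 := by
    funext b
    have := low_coeff_exact hn_ub humem hd₀ b
    rw [hPu] at this
    simp only [Pi.zero_apply, Polynomial.coeff_zero] at this
    simpa [Matrix.mulVec, dotProduct] using this.symm
  have := congrFun (mulVec_eq_zero_of_det_ne (hL j₀ hj₀k) hmv) c₀
  exact hc₀ this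

lemma elim_high {N m : ℕ} {A : Fin (m + 1) → Matrix (Fin N) (Fin N) (Polynomial ℂ)}
    {n n' : ℤ} (hn_ub : ∀ i, A i ≠ 0 → (i : ℤ) - matNu (A i) ≤ n)
    (hn'_lb : ∀ i, A i ≠ 0 → n' ≤ (i : ℤ) - matDeg (A i))
    {k : ℕ} (hk : n ≤ (k : ℤ)) (hk' : n' ≤ (k : ℤ))
    (hD : ∀ J : ℕ, k ≤ J → (Dmat A n' (J : ℂ)).det ≠ 0) :
    ∀ D : ℕ, ∀ w : Fin N → Polynomial ℂ, (∀ c j, D ≤ j → (w c).coeff j = 0) →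
      ∃ u ∈ Msub N k, ∀ (c : Fin N) (j : ℕ), (k : ℤ) - n' ≤ (j : ℤ) →
        ((w - PopPoly A u) c).coeff j = 0 := by
  intro D
  induction D with
  | zero =>
    intro w hw
    refine ⟨0, (Msub N k).zero_mem, fun c j _ => ?_⟩
    rw [map_zero]
    simpa using hw c j (Nat.zero_le j)
  | succ D ih =>
    intro w hw
    by_cases hDlow : (k : ℤ) - n' ≤ (D : ℤ)
    · set J := ((D : ℤ) + n').toNat with hJdef
      have hJ : (J : ℤ) = (D : ℤ) + n' := by omega
      have hJk : k ≤ J := by omega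
      set v : Fin N → ℂ := fun c => (w c).coeff D with hvdef
      set vc : Fin N → ℂ := (Dmat A n' (J : ℂ))⁻¹.mulVec v with hvcdef
      set u₀ : Fin N → Polynomial ℂ := fun c => Polynomial.C (vc c) * Polynomial.X ^ J
        with hu₀def
      have hu₀coeff : ∀ c j, (u₀ c).coeff j = if J = j then vc c else 0 := by
        intro c j
        simp only [hu₀def, Polynomial.coeff_C_mul, Polynomial.coeff_X_pow, mul_ite, mul_one,
          mul_zero]
        exact if_congr eq_comm rfl rfl
      have hu₀mem : u₀ ∈ Msub N k := by
        intro c j hj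
        rw [hu₀coeff, if_neg (by omega)]
      have hu₀top : ∀ (c : Fin N) (j : ℕ), J < j → (u₀ c).coeff j = 0 := by
        intro c j hj
        rw [hu₀coeff, if_neg (by omega)]
      have hPu₀D : ∀ c, (PopPoly A u₀ c).coeff D = v c := by
        intro c
        have hd₁ : ((D : ℕ) : ℤ) = (J : ℤ) - n' := by omega
        rw [high_coeff_exact hn'_lb hu₀top hd₁ c]
        have : ∀ c', (u₀ c').coeff J = vc c' := fun c' => by
          rw [hu₀coeff, if_pos rfl]
        simp only [this]
        have := congrFun (mulVec_inv_cancel (hD J hJk) v) c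
        simpa [Matrix.mulVec, dotProduct, hvcdef] using this
      have hw' : ∀ (c : Fin N) (j : ℕ), D ≤ j → ((w - PopPoly A u₀) c).coeff j = 0 := by
        intro c j hj
        rcases eq_or_lt_of_le hj with he | hlt
        · simp only [Pi.sub_apply, Polynomial.coeff_sub, ← he, hPu₀D c, hvdef]
          ring
        · simp only [Pi.sub_apply, Polynomial.coeff_sub]
          rw [hw c j (by omega), high_coeff_zero hn'_lb hu₀top c (by omega)]
          ring
      obtain ⟨u₁, hu₁mem, hu₁⟩ := ih (w - PopPoly A u₀) hw'
      refine ⟨u₀ + u₁, (Msub N k).add_mem hu₀mem hu₁mem, fun c j hj => ?_⟩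
      have : w - PopPoly A (u₀ + u₁) = (w - PopPoly A u₀) - PopPoly A u₁ := by
        rw [map_add]; abel
      rw [this]
      exact hu₁ c j hj
    · refine ⟨0, (Msub N k).zero_mem, fun c j hj => ?_⟩
      rw [map_zero]
      simpa using hw c j (by omega)

lemma Pop_top {N m : ℕ} {A : Fin (m + 1) → Matrix (Fin N) (Fin N) (Polynomial ℂ)}
    {n' : ℤ} (hn'_lb : ∀ i, A i ≠ 0 → n' ≤ (i : ℤ) - matDeg (A i))
    {k : ℕ} (hk' : n' ≤ (k : ℤ))
    (hD : ∀ J : ℕ, k ≤ J → (Dmat A n' (J : ℂ)).det ≠ 0)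
    {u : Fin N → Polynomial ℂ} (hu : u ∈ Msub N k) (hu0 : u ≠ 0) :
    ∃ (d₁ : ℕ) (b : Fin N), (k : ℤ) - n' ≤ (d₁ : ℤ) ∧ (PopPoly A u b).coeff d₁ ≠ 0 := by
  classical
  set B := Finset.univ.sup fun c => (u c).natDegree with hB
  set Q : ℕ → Prop := fun j => ∃ c, (u c).coeff j ≠ 0 with hQ
  obtain ⟨c₁, hc₁⟩ := Function.ne_iff.mp hu0
  have hc₁' : u c₁ ≠ 0 := by simpa using hc₁
  have hwit : Q (u c₁).natDegree := ⟨c₁, Polynomial.leadingCoeff_ne_zero.mpr hc₁'⟩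
  have hwitB : (u c₁).natDegree ≤ B :=
    Finset.le_sup (f := fun c => (u c).natDegree) (Finset.mem_univ c₁)
  set J := Nat.findGreatest Q B with hJdef
  have hQJ : Q J := Nat.findGreatest_spec hwitB hwit
  have htop : ∀ (c : Fin N) (j : ℕ), J < j → (u c).coeff j = 0 := by
    intro c j hj
    by_cases hjB : j ≤ B
    · by_contra hne
      exact Nat.findGreatest_is_greatest hj hjB ⟨c, hne⟩
    · refine Polynomial.coeff_eq_zero_of_natDegree_lt ?_
      have : (u c).natDegree ≤ B :=
        Finset.le_sup (f := fun c => (u c).natDegree) (Finset.mem_univ c)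
      omega
  obtain ⟨c₂, hc₂⟩ := hQJ
  have hJk : k ≤ J := by
    by_contra hcon
    exact hc₂ (hu c₂ J (by omega))
  have hd₁ : ((((J : ℤ) - n').toNat : ℤ)) = (J : ℤ) - n' := by omega
  set d₁ := ((J : ℤ) - n').toNat with hd₁def
  by_contra hall
  push_neg at hall
  have hmv : (Dmat A n' (J : ℂ)).mulVec (fun c => (u c).coeff J) = 0 := by
    funext b
    have := high_coeff_exact hn'_lb htop hd₁ b
    have hz := hall d₁ b (by omega)
    rw [hz] at this
    simpa [Matrix.mulVec, dotProduct] using this.symm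
  exact hc₂ (congrFun (mulVec_eq_zero_of_det_ne (hD J hJk) hmv) c₂)

/-- **Lemma 1.** If `l(k)` and `d(k)` are not identically zero, then `P` maps `M(k)^N`
into `M(k-n)^N` for `k ≥ n`, and for `k` large enough this restriction
`P : M(k)^N → M(k-n)^N` is injective with cokernel of dimension `(n - n')·N`. -/
theorem cokernel_of_restriction {N m : ℕ} (hN : 1 ≤ N)
    (A : Fin (m + 1) → Matrix (Fin N) (Fin N) (Polynomial ℂ))
    (hAm : (A (Fin.last m)).det ≠ 0)
    (n n' : ℤ)
    (hn_ub : ∀ i, A i ≠ 0 → (i : ℤ) - matNu (A i) ≤ n)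
    (hn_mem : ∃ i, A i ≠ 0 ∧ (i : ℤ) - matNu (A i) = n)
    (hn'_lb : ∀ i, A i ≠ 0 → n' ≤ (i : ℤ) - matDeg (A i))
    (hn'_mem : ∃ i, A i ≠ 0 ∧ (i : ℤ) - matDeg (A i) = n')
    (hl : ∃ k : ℂ, (Lmat A n k).det ≠ 0)
    (hd : ∃ k : ℂ, (Dmat A n' k).det ≠ 0) :
    (∀ k : ℕ, n ≤ (k : ℤ) → ∀ u ∈ Msub N k, PopPoly A u ∈ Msub N ((k : ℤ) - n).toNat) ∧
      ∃ K : ℕ, ∀ k : ℕ, K ≤ k →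
        (∀ u ∈ Msub N k, PopPoly A u = 0 → u = 0) ∧
        FiniteDimensional ℂ
          (↥(Msub N ((k : ℤ) - n).toNat) ⧸
            Submodule.comap (Msub N ((k : ℤ) - n).toNat).subtype
              (Submodule.map (PopPoly A) (Msub N k))) ∧
        (Module.finrank ℂ
            (↥(Msub N ((k : ℤ) - n).toNat) ⧸
              Submodule.comap (Msub N ((k : ℤ) - n).toNat).subtype
                (Submodule.map (PopPoly A) (Msub N k))) : ℤ) = (n - n') * N := by
  classical
  refine ⟨fun k hk u hu => Pop_maps hn_ub hk hu, ?_⟩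
  -- n' ≤ n
  have hnn' : n' ≤ n := by
    obtain ⟨i, hAi, hieq⟩ := hn_mem
    obtain ⟨b, hb⟩ := Function.ne_iff.mp hAi
    obtain ⟨c, hc⟩ := Function.ne_iff.mp hb
    have hc' : A i b c ≠ 0 := by simpa using hc
    have hcoeff : (A i b c).coeff (A i b c).natTrailingDegree ≠ 0 :=
      Polynomial.coeff_natTrailingDegree_ne_zero.mpr hc'
    have h1 := matNu_le_of_coeff_ne hcoeff
    have h2 := le_matDeg_of_coeff_ne hcoeff
    have h3 := hn'_lb i hAi
    omega
  -- eventual nonvanishing of the determinants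
  obtain ⟨K₁, hK₁⟩ := eventually_ne_zero_of_exists (p := (LmatX A n).det)
    (by obtain ⟨z, hz⟩ := hl; exact ⟨z, by rw [← det_Lmat_eq_eval]; exact hz⟩)
  obtain ⟨K₂, hK₂⟩ := eventually_ne_zero_of_exists (p := (DmatX A n').det)
    (by obtain ⟨z, hz⟩ := hd; exact ⟨z, by rw [← det_Dmat_eq_eval]; exact hz⟩)
  refine ⟨max (max K₁ K₂) (max n.toNat n'.toNat), fun k hKk => ?_⟩
  have hkK₁ : K₁ ≤ k := le_trans (le_trans (le_max_left _ _) (le_max_left _ _)) hKk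
  have hkK₂ : K₂ ≤ k := le_trans (le_trans (le_max_right _ _) (le_max_left _ _)) hKk
  have hkn : n.toNat ≤ k := le_trans (le_trans (le_max_left _ _) (le_max_right _ _)) hKk
  have hkn' : n'.toNat ≤ k := le_trans (le_trans (le_max_right _ _) (le_max_right _ _)) hKk
  have hk : n ≤ (k : ℤ) := le_trans (Int.self_le_toNat n) (by exact_mod_cast hkn)
  have hk' : n' ≤ (k : ℤ) := le_trans (Int.self_le_toNat n') (by exact_mod_cast hkn')
  have hL : ∀ j : ℕ, k ≤ j → (Lmat A n (j : ℂ)).det ≠ 0 := fun j hj => by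
    rw [det_Lmat_eq_eval]; exact hK₁ j (le_trans hkK₁ hj)
  have hDnz : ∀ J : ℕ, k ≤ J → (Dmat A n' (J : ℂ)).det ≠ 0 := fun J hJ => by
    rw [det_Dmat_eq_eval]; exact hK₂ J (le_trans hkK₂ hJ)
  have hinj : ∀ u ∈ Msub N k, PopPoly A u = 0 → u = 0 :=
    fun u hu hPu => Pop_inj hn_ub hk hL hu hPu
  refine ⟨hinj, ?_⟩
  -- abbreviations
  set κ : ℕ := ((k : ℤ) - n).toNat with hκdef
  have hκ : (κ : ℤ) = (k : ℤ) - n := by omega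
  set κ' : ℕ := ((k : ℤ) - n').toNat with hκ'def
  have hκ' : (κ' : ℤ) = (k : ℤ) - n' := by omega
  have hκκ' : κ ≤ κ' := by omega
  set δ : ℕ := κ' - κ with hδdef
  have hδ : (δ : ℤ) = n - n' := by omega
  set S := Msub N κ with hSdef
  set I := Submodule.comap S.subtype (Submodule.map (PopPoly A) (Msub N k)) with hIdef
  -- the candidate basis vectors of the quotient
  set mon : (Fin δ × Fin N) → (Fin N → Polynomial ℂ) :=
    fun p c => if c = p.2 then Polynomial.X ^ (κ + (p.1 : ℕ)) else 0 with hmon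
  have hmoncoeff : ∀ p c j, (mon p c).coeff j
      = if c = p.2 ∧ j = κ + (p.1 : ℕ) then 1 else 0 := by
    intro p c j
    by_cases h1 : c = p.2
    · simp [hmon, h1, Polynomial.coeff_X_pow, eq_comm]
    · simp [hmon, h1]
  have hmonS : ∀ p, mon p ∈ S := by
    intro p c j hj
    rw [hmoncoeff, if_neg (by omega)]
  set e : (Fin δ × Fin N) → S := fun p => ⟨mon p, hmonS p⟩ with he
  set q : S →ₗ[ℂ] (S ⧸ I) := I.mkQ with hq
  have hcoe_sum : ∀ (g : (Fin δ × Fin N) → ℂ),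
      ((∑ p, g p • e p : S) : Fin N → Polynomial ℂ) = ∑ p, g p • mon p := by
    intro g
    have : S.subtype (∑ p, g p • e p) = ∑ p, g p • S.subtype (e p) := by
      rw [map_sum]; simp only [map_smul]
    exact this
  have hsumcoeff : ∀ (g : (Fin δ × Fin N) → ℂ) (c : Fin N) (j : ℕ),
      ((∑ p, g p • mon p) c).coeff j
        = ∑ p, g p * (if c = p.2 ∧ j = κ + (p.1 : ℕ) then 1 else 0) := by
    intro g c j
    rw [Finset.sum_apply]
    rw [Polynomial.finset_sum_coeff]
    refine Finset.sum_congr rfl fun p _ => ?_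
    rw [Pi.smul_apply, Polynomial.coeff_smul, hmoncoeff, smul_eq_mul]
  have hind : LinearIndependent ℂ (fun p => q (e p)) := by
    rw [Fintype.linearIndependent_iff]
    intro g hg
    set wS : S := ∑ p, g p • e p with hwSdef
    have hq0 : q wS = 0 := by
      rw [hwSdef, map_sum]
      simp only [map_smul]
      exact hg
    have hwI : wS ∈ I := by
      rwa [hq, Submodule.mkQ_apply, Submodule.Quotient.mk_eq_zero] at hq0
    obtain ⟨u, humem, hPu⟩ := Submodule.mem_map.mp (Submodule.mem_comap.mp hwI)
    have hPu' : PopPoly A u = (wS : Fin N → Polynomial ℂ) := hPu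
    have hu0 : u = 0 := by
      by_contra hu0
      obtain ⟨d₁, b, hd₁b, hne⟩ := Pop_top hn'_lb hk' hDnz humem hu0
      apply hne
      rw [congrFun hPu' b]
      rw [hcoe_sum g] at *
      rw [hsumcoeff g b d₁]
      refine Finset.sum_eq_zero fun p _ => ?_
      rw [if_neg, mul_zero]
      rintro ⟨-, h2⟩
      have : (p.1 : ℕ) < δ := p.1.isLt
      omega
    have hw0 : (wS : Fin N → Polynomial ℂ) = 0 := by
      rw [← hPu', hu0, map_zero]
    intro p
    have hzero := hsumcoeff g p.2 (κ + (p.1 : ℕ))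
    rw [← hcoe_sum g, ← hwSdef, hw0] at hzero
    simp only [Pi.zero_apply, Polynomial.coeff_zero] at hzero
    rw [Finset.sum_eq_single p] at hzero
    · rw [if_pos ⟨rfl, rfl⟩, mul_one] at hzero
      exact hzero.symm
    · intro p' _ hne
      rw [if_neg, mul_zero]
      rintro ⟨h1, h2⟩
      exact hne (Prod.ext (Fin.ext (by omega)) h1.symm)
    · intro hp
      exact absurd (Finset.mem_univ p) hp
  have hspan : ⊤ ≤ Submodule.span ℂ (Set.range fun p => q (e p)) := by
    rw [top_le_iff, eq_top_iff]
    intro x _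
    obtain ⟨y, rfl⟩ := Submodule.mkQ_surjective I x
    obtain ⟨w, hwmem⟩ := y
    set Dw : ℕ := (Finset.univ.sup fun c => (w c).natDegree) + 1 with hDw
    have hwtop : ∀ (c : Fin N) (j : ℕ), Dw ≤ j → (w c).coeff j = 0 := by
      intro c j hj
      refine Polynomial.coeff_eq_zero_of_natDegree_lt ?_
      have h2 : (w c).natDegree ≤ Finset.univ.sup fun c => (w c).natDegree := by
        have := Finset.le_sup (f := fun c => (w c).natDegree) (Finset.mem_univ c)
        simpa using this
      omega
    obtain ⟨u, humem, hres⟩ := elim_high hn_ub hn'_lb hk hk' hDnz Dw w hwtop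
    set r : Fin N → Polynomial ℂ := w - PopPoly A u with hrdef
    have hPuS : PopPoly A u ∈ S := Pop_maps hn_ub hk humem
    have hrS : r ∈ S := S.sub_mem hwmem hPuS
    have hqeq : I.mkQ ⟨w, hwmem⟩ = I.mkQ ⟨r, hrS⟩ := by
      rw [Submodule.mkQ_apply, Submodule.mkQ_apply, Submodule.Quotient.eq]
      have hsub : (⟨w, hwmem⟩ - ⟨r, hrS⟩ : S) = ⟨PopPoly A u, hPuS⟩ := by
        apply Subtype.ext
        show w - r = PopPoly A u
        rw [hrdef]
        abel
      rw [hsub]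
      exact Submodule.mem_comap.mpr (Submodule.mem_map.mpr ⟨u, humem, rfl⟩)
    rw [show I.mkQ ⟨w, hwmem⟩ = q ⟨w, hwmem⟩ from rfl, show q = I.mkQ from hq, hqeq]
    have hrlow : ∀ (c : Fin N) (j : ℕ), j < κ → (r c).coeff j = 0 := fun c j hj => hrS c j hj
    have hrhigh : ∀ (c : Fin N) (j : ℕ), κ' ≤ j → (r c).coeff j = 0 := fun c j hj =>
      hres c j (by omega)
    have hrrep : (⟨r, hrS⟩ : S)
        = ∑ p : Fin δ × Fin N, ((r p.2).coeff (κ + (p.1 : ℕ))) • e p := by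
      apply Subtype.ext
      rw [hcoe_sum (fun p => (r p.2).coeff (κ + (p.1 : ℕ)))]
      show r = _
      funext c
      apply Polynomial.ext
      intro j
      rw [hsumcoeff (fun p => (r p.2).coeff (κ + (p.1 : ℕ))) c j]
      by_cases hjlo : j < κ
      · rw [hrlow c j hjlo]
        refine (Finset.sum_eq_zero fun p _ => ?_).symm
        rw [if_neg, mul_zero]
        rintro ⟨-, h2⟩
        omega
      · by_cases hjhi : κ' ≤ j
        · rw [hrhigh c j hjhi]
          refine (Finset.sum_eq_zero fun p _ => ?_).symm
          rw [if_neg, mul_zero]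
          rintro ⟨-, h2⟩
          have : (p.1 : ℕ) < δ := p.1.isLt
          omega
        · have hjδ : j - κ < δ := by omega
          set p₀ : Fin δ × Fin N := ⟨⟨j - κ, hjδ⟩, c⟩ with hp₀
          have hv1 : (p₀.1 : ℕ) = j - κ := rfl
          have hv2 : p₀.2 = c := rfl
          rw [Finset.sum_eq_single p₀ ?_ ?_]
          · rw [if_pos ⟨hv2.symm, by omega⟩, mul_one, hv2]
            congr 1
            omega
          · intro p' _ hne
            rw [if_neg, mul_zero]
            rintro ⟨h1, h2⟩
            refine hne (Prod.ext (Fin.ext (by omega)) ?_)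
            rw [hv2, ← h1]
          · intro hp
            exact absurd (Finset.mem_univ _) hp
    rw [hrrep, map_sum]
    simp only [map_smul]
    exact Submodule.sum_mem _ fun p _ =>
      Submodule.smul_mem _ _ (Submodule.subset_span ⟨p, rfl⟩)
  let bb : Module.Basis (Fin δ × Fin N) ℂ (S ⧸ I) := Module.Basis.mk hind hspan
  have hfd : FiniteDimensional ℂ (S ⧸ I) := Module.Finite.of_basis bb
  refine ⟨hfd, ?_⟩
  rw [Module.finrank_eq_card_basis bb, Fintype.card_prod, Fintype.card_fin, Fintype.card_fin]
  push_cast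
  rw [hδ]
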